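/- arXiv:1302.6870 — 2 statements merged into one kernel-verified Lean document; each statement's English description precedes it below -/
import Mathlib

section
/- Let G be an infinite, locally finite, connected, transitive graph, let v be a fixed vertex, and let p be such that ω_p almost surely contains a unique infinite cluster U. Let (Γ_n)_{n≥1} be site percolations such that each pair (ω_p, Γ_n) is jointly Aut(G)-invariant and lim_{n→∞} P[v ∈ Γ_n] = 0. Define ξ_{p,n} to be the set of vertices w with d_G(w,U) ≤ n such that ⋃_{u ∈ D(w)∪{w}} U(u) is contained in a single connected component of the subgraph induced by ω_p ∖ Γ_n, where D(w) is the set of neighbours of w and U(u) is the set of vertices of U at minimal graph distance from u. Then lim_{n→∞} P[v ∉ ξ_{p,n}] = 0. -/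
open MeasureTheory ProbabilityTheory Filter

namespace Percolation

variable {V : Type*}

/-- The subgraph of `G` induced by the vertex set `ω` (as a graph on all of `V`,
with vertices outside `ω` isolated). -/
def restrict (G : SimpleGraph V) (ω : Set V) : SimpleGraph V where
  Adj a b := G.Adj a b ∧ a ∈ ω ∧ b ∈ ω
  symm := ⟨fun _ _ h => ⟨h.1.symm, h.2.2, h.2.1⟩⟩
  loopless := ⟨fun a h => G.loopless.irrefl a h.1⟩

/-- The cluster (connected component) of `v` in the configuration `ω`. -/
def cluster (G : SimpleGraph V) (ω : Set V) (v : V) : Set V :=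
  {u | (restrict G ω).Reachable v u}

/-- `C^∞(ω)`: the set of vertices of `ω` lying in an infinite cluster of `ω`. -/
def Cinf (G : SimpleGraph V) (ω : Set V) : Set V :=
  {v | v ∈ ω ∧ (cluster G ω v).Infinite}

/-- `N(ω) ≥ 1`: the configuration `ω` contains an infinite cluster. -/
def HasInfCluster (G : SimpleGraph V) (ω : Set V) : Prop :=
  (Cinf G ω).Nonempty

/-- The collection of infinite clusters of the configuration `ω`. -/
def infClusters (G : SimpleGraph V) (ω : Set V) : Set (Set V) :=
  {C | ∃ v ∈ Cinf G ω, C = cluster G ω v}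

/-- `G` is (vertex-)transitive. -/
def VertexTransitive (G : SimpleGraph V) : Prop :=
  ∀ u v : V, ∃ g : G ≃g G, g u = v

/-- The topology of pointwise convergence on `Aut(G)` (with `V` discrete). -/
def autTop (G : SimpleGraph V) : TopologicalSpace (G ≃g G) :=
  letI : TopologicalSpace V := ⊥
  TopologicalSpace.induced (fun g => ((g : V → V), ((g.symm : V → V)))) inferInstance

/-- `G` is unimodular: there is a closed subgroup `H` of `Aut(G)` with
`|Stab_H(u)v| = |Stab_H(v)u|` for all `u, v`. -/
def Unimodular (G : SimpleGraph V) : Prop :=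
  ∃ H : Subgroup (G ≃g G),
    (letI := autTop G; IsClosed (H : Set (G ≃g G))) ∧
    ∀ u v : V,
      Nat.card {w : V | ∃ h ∈ H, h u = u ∧ h v = w} =
      Nat.card {w : V | ∃ h ∈ H, h v = v ∧ h u = w}

/-- The inner vertex boundary of `W`: vertices of `W` with a neighbour outside `W`. -/
def vertexBoundary (G : SimpleGraph V) (W : Set V) : Set V :=
  {v ∈ W | ∃ u, u ∉ W ∧ G.Adj v u}

/-- `G` is non-amenable: the vertex isoperimetric constant is positive. -/
def Nonamenable (G : SimpleGraph V) : Prop :=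
  ∃ c : ℝ, 0 < c ∧ ∀ W : Set V, W.Finite → W.Nonempty →
    c * (Nat.card W : ℝ) ≤ (Nat.card (vertexBoundary G W) : ℝ)

/-- `U` is a family of i.i.d. uniform-`[0,1]` random variables on `(Ω, P)`. -/
def IsIIDUniform {ι Ω : Type*} [MeasurableSpace Ω] (P : Measure Ω) (U : ι → Ω → ℝ) : Prop :=
  (∀ i, Measurable (U i)) ∧
  iIndepFun U P ∧
  ∀ i, Measure.map (U i) P = volume.restrict (Set.Icc 0 1)

/-- The standard coupling: `ω_p = {i : U i ≤ p}`. -/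
def config {ι Ω : Type*} (U : ι → Ω → ℝ) (p : ℝ) (x : Ω) : Set ι :=
  {i | U i x ≤ p}

/-- Bernoulli site percolation at level `p` on `G` percolates almost surely. -/
def percolates (G : SimpleGraph V) {Ω : Type*} [MeasurableSpace Ω]
    (P : Measure Ω) (U : V → Ω → ℝ) (p : ℝ) : Prop :=
  ∀ᵐ x ∂P, HasInfCluster G (config U p x)

/-- The critical probability `p_c(G)` for Bernoulli site percolation on `G`,
defined through the standard coupling `(P, U)`. -/
noncomputable def pcrit (G : SimpleGraph V) {Ω : Type*} [MeasurableSpace Ω]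
    (P : Measure Ω) (U : V → Ω → ℝ) : ℝ :=
  sInf {p : ℝ | 0 ≤ p ∧ p ≤ 1 ∧ percolates G P U p}

/-- The self-destructive percolation configuration `Φ(p, δ)`. -/
def SDP (G : SimpleGraph V) {Ω : Type*} (U Ut : V → Ω → ℝ) (p δ : ℝ) (x : Ω) : Set V :=
  (config U p x \ Cinf G (config U p x)) ∪ config Ut δ x

end Percolation

open Percolation

namespace Percolation

variable {V : Type*}

/-- `U(u)`: the set of vertices of `T` at minimal graph distance from `u`. -/
def nearSet (G : SimpleGraph V) (T : Set V) (u : V) : Set V :=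
  {y ∈ T | ∀ z ∈ T, G.dist u y ≤ G.dist u z}

/-- `S` is contained in a single connected component of the configuration `ω`. -/
def InOneComponent (G : SimpleGraph V) (ω S : Set V) : Prop :=
  S ⊆ ω ∧ ∀ a ∈ S, ∀ b ∈ S, (restrict G ω).Reachable a b

/-- The configuration `ξ`: vertices `w` with `d_G(w,T) ≤ n` such that
`⋃_{u ∈ D(w) ∪ {w}} U(u)` lies in one connected component of `ω ∖ Γ`. -/
def xiSet (G : SimpleGraph V) (T ω Γ : Set V) (n : ℕ) : Set V :=
  {w | (∃ u ∈ T, G.dist w u ≤ n) ∧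
    InOneComponent G (ω \ Γ)
      (⋃ u ∈ insert w (G.neighborSet w), nearSet G T u)}

end Percolation

namespace Percolation

variable {V : Type*}

-- My auxiliary lemmas

lemma restrict_adj {G : SimpleGraph V} {ω : Set V} {a b : V} :
    (restrict G ω).Adj a b ↔ G.Adj a b ∧ a ∈ ω ∧ b ∈ ω := Iff.rfl

lemma restrict_le_restrict (G : SimpleGraph V) {ω ω' : Set V} (h : ω ⊆ ω') :
    restrict G ω ≤ restrict G ω' := fun _ _ hab => restrict_adj.mpr
      ⟨(restrict_adj.mp hab).1, h (restrict_adj.mp hab).2.1, h (restrict_adj.mp hab).2.2⟩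

lemma support_mem {G : SimpleGraph V} {ω : Set V} {a b : V}
    (w : (restrict G ω).Walk a b) (ha : a ∈ ω) : ∀ x ∈ w.support, x ∈ ω := by
  induction w with
  | nil =>
      intro x hx
      rw [SimpleGraph.Walk.support_nil, List.mem_singleton] at hx
      exact hx ▸ ha
  | cons h q ih =>
      intro x hx
      rw [SimpleGraph.Walk.support_cons, List.mem_cons] at hx
      rcases hx with rfl | hx
      · exact ha
      · exact ih (restrict_adj.mp h).2.2 x hx

lemma reach_restrict {G : SimpleGraph V} {ω S : Set V} {a b : V}
    (w : (restrict G ω).Walk a b) (hs : ∀ x ∈ w.support, x ∈ S) :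
    (restrict G S).Reachable a b := by
  induction w with
  | nil => exact SimpleGraph.Reachable.refl _
  | @cons a c b h q ih =>
      have hadj : (restrict G S).Adj a c :=
        restrict_adj.mpr ⟨(restrict_adj.mp h).1, hs a (SimpleGraph.Walk.start_mem_support _),
          hs c (by rw [SimpleGraph.Walk.support_cons]
                   exact List.mem_cons_of_mem _ (SimpleGraph.Walk.start_mem_support q))⟩
      exact hadj.reachable.trans (ih fun x hx => hs x
        (by rw [SimpleGraph.Walk.support_cons]; exact List.mem_cons_of_mem _ hx))

lemma walk_head_cases {G : SimpleGraph V} {y u : V} (w : G.Walk y u) :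
    y = u ∨ ∃ z, G.Adj y z ∧ ∃ q : G.Walk z u, q.length + 1 = w.length := by
  cases w with
  | nil => exact Or.inl rfl
  | cons h q => exact Or.inr ⟨_, h, q, rfl⟩

lemma ball_finite (G : SimpleGraph V) (hlf : G.LocallyFinite) (hconn : G.Connected)
    (u : V) : ∀ n : ℕ, {y | G.dist u y ≤ n}.Finite := by
  intro n
  induction n with
  | zero =>
      apply Set.Finite.subset (Set.finite_singleton u)
      intro y hy
      simp only [Set.mem_setOf_eq, Nat.le_zero] at hy
      rcases SimpleGraph.dist_eq_zero_iff_eq_or_not_reachable.mp hy with h | h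
      · exact h ▸ rfl
      · exact absurd (hconn.preconnected u y) h
  | succ n ih =>
      apply Set.Finite.subset
        (ih.union (ih.biUnion (fun z _ => (letI := hlf z; (G.neighborSet z).toFinite))))
      intro y hy
      simp only [Set.mem_setOf_eq] at hy
      obtain ⟨w, hw⟩ := (hconn.preconnected u y).exists_walk_length_eq_dist
      rcases walk_head_cases w.reverse with rfl | ⟨z, hyz, q, hq⟩
      · exact Or.inl (by simp [Set.mem_setOf_eq, SimpleGraph.dist_self])
      · right
        have hdz : G.dist u z ≤ n := by
          have h1 : G.dist u z ≤ q.length := by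
            have := SimpleGraph.dist_le q.reverse
            rwa [SimpleGraph.Walk.length_reverse] at this
          have h2 : q.length + 1 = w.length := by
            rwa [SimpleGraph.Walk.length_reverse] at hq
          omega
        exact Set.mem_biUnion hdz hyz.symm


lemma countable_of_connected (G : SimpleGraph V) [Nonempty V] (hlf : G.LocallyFinite)
    (hconn : G.Connected) : Countable V := by
  obtain ⟨u⟩ := ‹Nonempty V›
  have hsub : (Set.univ : Set V) ⊆ ⋃ n : ℕ, {y | G.dist u y ≤ n} := fun y _ =>
    Set.mem_iUnion.mpr ⟨G.dist u y, Set.mem_setOf_eq ▸ le_refl _⟩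
  exact Set.countable_univ_iff.mp ((Set.countable_iUnion fun n =>
    (ball_finite G hlf hconn u n).countable).mono hsub)

lemma chain_reach {G : SimpleGraph V} {ω : Set V} {b : V} :
    ∀ (l : List V) (a : V), List.Chain G.Adj a l → (a :: l).getLast? = some b →
      (∀ x ∈ a :: l, x ∈ ω) → (restrict G ω).Reachable a b := by
  intro l
  induction l with
  | nil =>
      intro a _ hlast _
      have : a = b := by simpa using hlast
      exact this ▸ SimpleGraph.Reachable.refl a
  | cons c t ih =>
      intro a hchain hlast hmem
      have hc := List.chain_cons.mp hchain
      have hac : (restrict G ω).Adj a c := restrict_adj.mpr ⟨hc.1, hmem a (by simp), hmem c (by simp)⟩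
      refine hac.reachable.trans (ih c hc.2 ?_ fun x hx => hmem x (List.mem_cons_of_mem _ hx))
      rwa [List.getLast?_cons_cons] at hlast

lemma reach_chain {G : SimpleGraph V} {ω : Set V} {b : V} :
    ∀ {a : V} (w : (restrict G ω).Walk a b), a ∈ ω →
      ∃ l : List V, List.Chain G.Adj a l ∧ (a :: l).getLast? = some b ∧ ∀ x ∈ a :: l, x ∈ ω := by
  intro a w
  induction w with
  | nil => exact fun ha => ⟨[], List.Chain.nil, by simp, by simpa using ha⟩
  | @cons a c b h q ih =>
      intro _
      obtain ⟨l, hchain, hlast, hmem⟩ := ih (restrict_adj.mp h).2.2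
      refine ⟨c :: l, List.chain_cons.mpr ⟨(restrict_adj.mp h).1, hchain⟩, by rwa [List.getLast?_cons_cons], ?_⟩
      intro x hx
      rcases List.mem_cons.mp hx with rfl | hx
      · exact (restrict_adj.mp h).2.1
      · exact hmem x hx

lemma reach_iff {G : SimpleGraph V} {ω : Set V} {a b : V} :
    (restrict G ω).Reachable a b ↔
      a = b ∨ ∃ l : List V, List.Chain G.Adj a l ∧ (a :: l).getLast? = some b ∧
        ∀ x ∈ a :: l, x ∈ ω := by
  constructor
  · intro h
    obtain ⟨w⟩ := h
    cases w with
    | nil => exact Or.inl rfl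
    | cons h' q => exact Or.inr (reach_chain (q.cons h') (restrict_adj.mp h').2.1)
  · rintro (rfl | ⟨l, hchain, hlast, hmem⟩)
    · exact SimpleGraph.Reachable.refl _
    · exact chain_reach l a hchain hlast hmem

section Meas

variable [Countable V] (G : SimpleGraph V)

lemma meas_reach (a b : V) :
    Measurable fun ω : Set V => (restrict G ω).Reachable a b := by
  simp only [reach_iff]
  refine Measurable.or measurable_const (Measurable.exists fun l : List V => ?_)
  refine Measurable.and measurable_const (Measurable.and measurable_const ?_)
  exact Measurable.forall fun x => Measurable.imp measurable_const (measurable_set_mem x)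

lemma infinite_iff_finset {S : Set V} :
    S.Infinite ↔ ∀ t : Finset V, ∃ y, y ∈ S ∧ y ∉ t := by
  constructor
  · intro h t
    obtain ⟨y, hy, hyt⟩ := h.exists_notMem_finset t
    exact ⟨y, hy, hyt⟩
  · intro h hfin
    obtain ⟨y, hyS, hy⟩ := h hfin.toFinset
    exact hy (hfin.mem_toFinset.mpr hyS)

lemma meas_cinf (y : V) : Measurable fun ω : Set V => y ∈ Cinf G ω := by
  have heq : ∀ ω : Set V, (y ∈ Cinf G ω) =
      (y ∈ ω ∧ ∀ t : Finset V, ∃ z, z ∈ cluster G ω y ∧ z ∉ t) := by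
    intro ω
    simp only [Cinf, Set.mem_setOf_eq, infinite_iff_finset]
  simp only [heq]
  refine Measurable.and (measurable_set_mem y) (Measurable.forall fun t =>
    Measurable.exists fun z => Measurable.and (meas_reach G y z) measurable_const)

lemma meas_near (u y : V) :
    Measurable fun ω : Set V => y ∈ nearSet G (Cinf G ω) u := by
  have heq : ∀ ω : Set V, (y ∈ nearSet G (Cinf G ω) u) =
      (y ∈ Cinf G ω ∧ ∀ z, z ∈ Cinf G ω → G.dist u y ≤ G.dist u z) := fun ω => rfl
  simp only [heq]
  exact Measurable.and (meas_cinf G y) (Measurable.forall fun z =>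
    Measurable.imp (meas_cinf G z) measurable_const)

end Meas

def Sv (G : SimpleGraph V) (v : V) (ω : Set V) : Set V :=
  ⋃ u ∈ insert v (G.neighborSet v), nearSet G (Cinf G ω) u

lemma mem_Sv {G : SimpleGraph V} {v y : V} {ω : Set V} :
    y ∈ Sv G v ω ↔ ∃ u, u ∈ insert v (G.neighborSet v) ∧ y ∈ nearSet G (Cinf G ω) u := by
  simp [Sv]

lemma meas_Sv [Countable V] (G : SimpleGraph V) (v y : V) :
    Measurable fun ω : Set V => y ∈ Sv G v ω := by
  simp only [mem_Sv]
  exact Measurable.exists fun u => Measurable.and measurable_const (meas_near G u y)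

def AA (G : SimpleGraph V) (v : V) (r : ℕ) : Set (Set V) :=
  {ω | (∃ u, u ∈ Cinf G ω ∧ G.dist v u ≤ r) ∧
    ∃ W : Finset V, (∀ x ∈ W, G.dist v x ≤ r) ∧ (∀ x ∈ W, x ∈ ω) ∧
      (∀ y, y ∈ Sv G v ω → y ∈ W) ∧
      ∀ a, a ∈ Sv G v ω → ∀ b, b ∈ Sv G v ω → (restrict G (↑W : Set V)).Reachable a b}

lemma meas_AA [Countable V] (G : SimpleGraph V) (v : V) (r : ℕ) :
    MeasurableSet (AA G v r) := by
  refine measurableSet_setOf.mpr (Measurable.and ?_ ?_)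
  · exact Measurable.exists fun u => Measurable.and (meas_cinf G u) measurable_const
  · refine Measurable.exists fun W : Finset V => Measurable.and measurable_const
      (Measurable.and ?_ (Measurable.and ?_ ?_))
    · exact Measurable.forall fun x => Measurable.imp measurable_const (measurable_set_mem x)
    · exact Measurable.forall fun y => Measurable.imp (meas_Sv G v y) measurable_const
    · exact Measurable.forall fun a => Measurable.imp (meas_Sv G v a)
        (Measurable.forall fun b => Measurable.imp (meas_Sv G v b) measurable_const)

lemma AA_mono (G : SimpleGraph V) (v : V) {r r' : ℕ} (h : r ≤ r') :
    AA G v r ⊆ AA G v r' := by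
  rintro ω ⟨⟨u, hu, hd⟩, W, h1, h2, h3, h4⟩
  exact ⟨⟨u, hu, hd.trans h⟩, W, fun x hx => (h1 x hx).trans h, h2, h3, h4⟩

lemma exists_witness (G : SimpleGraph V) {ω S : Set V} (hfin : S.Finite) (hω : S ⊆ ω)
    (hr : ∀ a ∈ S, ∀ b ∈ S, (restrict G ω).Reachable a b) :
    ∃ W : Finset V, (∀ x ∈ W, x ∈ ω) ∧ (∀ y ∈ S, y ∈ W) ∧
      ∀ a ∈ S, ∀ b ∈ S, (restrict G (↑W : Set V)).Reachable a b := by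
  classical
  rcases S.eq_empty_or_nonempty with rfl | ⟨a₀, ha₀⟩
  · exact ⟨∅, by simp, by simp, by simp⟩
  · haveI := hfin.to_subtype
    let w : ∀ b : S, (restrict G ω).Walk a₀ b := fun b => (hr a₀ ha₀ b b.2).some
    have hT : (⋃ b : S, {x | x ∈ (w b).support}).Finite :=
      Set.finite_iUnion fun b => (w b).support.finite_toSet
    refine ⟨hT.toFinset, ?_, ?_, ?_⟩
    · intro x hx
      rw [Set.Finite.mem_toFinset] at hx
      obtain ⟨b, hb⟩ := Set.mem_iUnion.mp hx
      exact support_mem (w b) (hω ha₀) x hb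
    · intro y hy
      rw [Set.Finite.mem_toFinset]
      exact Set.mem_iUnion.mpr ⟨⟨y, hy⟩, SimpleGraph.Walk.end_mem_support _⟩
    · intro a ha b hb
      have hsub : ∀ (c : S), ∀ x ∈ (w c).support, x ∈ (↑hT.toFinset : Set V) := by
        intro c x hx
        rw [Set.Finite.coe_toFinset]
        exact Set.mem_iUnion.mpr ⟨c, hx⟩
      exact (reach_restrict (w ⟨a, ha⟩) (hsub _)).symm.trans
        (reach_restrict (w ⟨b, hb⟩) (hsub _))

lemma nearSet_nonempty_finite (G : SimpleGraph V) (hconn : G.Connected)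
    (hlf : G.LocallyFinite) {T : Set V} (hT : T.Nonempty) (u : V) :
    (nearSet G T u).Nonempty ∧ (nearSet G T u).Finite := by
  obtain ⟨t0, ht0⟩ := hT
  have hne : {k | ∃ y ∈ T, G.dist u y = k}.Nonempty := ⟨_, t0, ht0, rfl⟩
  obtain ⟨y0, hy0T, hy0⟩ := Nat.sInf_mem hne
  have hy0near : y0 ∈ nearSet G T u :=
    ⟨hy0T, fun z hz => by rw [hy0]; exact Nat.sInf_le ⟨z, hz, rfl⟩⟩
  refine ⟨⟨y0, hy0near⟩, Set.Finite.subset (ball_finite G hlf hconn u (G.dist u y0)) ?_⟩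
  intro y hy
  exact hy.2 y0 hy0T

lemma exists_r (G : SimpleGraph V) (hconn : G.Connected) (hlf : G.LocallyFinite)
    (v : V) {ω : Set V} (huniq : ∃! C, C ∈ infClusters G ω) :
    ∃ r : ℕ, ω ∈ AA G v r := by
  obtain ⟨C, hC, hCuniq⟩ := huniq
  obtain ⟨v₀, hv₀, hCeq⟩ := hC
  have hcl : ∀ u, u ∈ Cinf G ω → cluster G ω u = C := fun u hu => hCuniq _ ⟨u, hu, rfl⟩
  have hCn : (Cinf G ω).Nonempty := ⟨v₀, hv₀⟩
  have hreach : ∀ a ∈ Cinf G ω, ∀ b ∈ Cinf G ω, (restrict G ω).Reachable a b := by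
    intro a ha b hb
    have hb' : b ∈ cluster G ω a := by
      rw [hcl a ha, ← hcl b hb]
      exact SimpleGraph.Reachable.refl b
    exact hb'
  have hSsub : Sv G v ω ⊆ Cinf G ω := by
    intro y hy
    obtain ⟨u, _, hy⟩ := mem_Sv.mp hy
    exact hy.1
  have hSfin : (Sv G v ω).Finite := by
    refine Set.Finite.biUnion (Set.Finite.insert v (letI := hlf; (G.neighborSet v).toFinite))
      fun u _ => (nearSet_nonempty_finite G hconn hlf hCn u).2
  obtain ⟨W, hW1, hW2, hW3⟩ := exists_witness G hSfin (fun y hy => (hSsub hy).1)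
    (fun a ha b hb => hreach a (hSsub ha) b (hSsub hb))
  refine ⟨(W.sup (G.dist v)) ⊔ G.dist v v₀, ⟨v₀, hv₀, le_sup_right⟩, W, ?_, hW1, hW2, hW3⟩
  intro x hx
  exact le_trans (Finset.le_sup hx) le_sup_left


end Percolation

/-- In the regime of a unique infinite cluster `U = C^∞(ω_p)`,
`P[v ∉ ξ_{p,n}] → 0` as `n → ∞`. -/
theorem stmt11 {V : Type*} (G : SimpleGraph V) [Infinite V]
    (hlf : G.LocallyFinite) (hconn : G.Connected)
    (htrans : VertexTransitive G) (v : V)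
    {Ω : Type*} [MeasurableSpace Ω] (P : Measure Ω) [IsProbabilityMeasure P]
    (U : V → Ω → ℝ) (hiid : IsIIDUniform P U) (p : ℝ)
    (huniq : ∀ᵐ x ∂P, ∃! C, C ∈ infClusters G (config U p x))
    (Γ : ℕ → Ω → Set V) (hmeas : ∀ n, Measurable (Γ n))
    (hinv : ∀ n : ℕ, ∀ g : G ≃g G,
      Measure.map (fun x => (⇑g '' config U p x, ⇑g '' Γ n x)) P =
        Measure.map (fun x => (config U p x, Γ n x)) P)
    (hlim : Tendsto (fun n => P {x | v ∈ Γ n x}) atTop (nhds 0)) :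
    Tendsto
      (fun n =>
        P {x | v ∉ xiSet G (Cinf G (config U p x)) (config U p x) (Γ n x) n})
      atTop (nhds 0) := by
  classical
  haveI : Countable V := countable_of_connected G hlf hconn
  -- measurability of the configuration map
  have hconfig : Measurable fun x => config U p x := by
    rw [measurable_set_iff]
    intro a
    exact measurableSet_setOf.mp ((hiid.1 a) measurableSet_Iic)
  -- invariance: the law of `u ∈ Γ n` does not depend on `u`
  have hGam : ∀ (n : ℕ) (u : V), P {x | u ∈ Γ n x} = P {x | v ∈ Γ n x} := by
    intro n u
    obtain ⟨g, hg⟩ := htrans v u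
    have himg : ∀ (B : Set V) (a : V), a ∈ ⇑g '' B ↔ g.symm a ∈ B := by
      intro B a
      constructor
      · rintro ⟨b, hb, rfl⟩
        rwa [g.symm_apply_apply]
      · intro h
        exact ⟨g.symm a, h, g.apply_symm_apply a⟩
    have hmeas1 : Measurable fun x => (config U p x, Γ n x) :=
      hconfig.prodMk (hmeas n)
    have hmeas2 : Measurable fun x => (⇑g '' config U p x, ⇑g '' Γ n x) := by
      refine Measurable.prodMk ?_ ?_ <;> rw [measurable_set_iff] <;> intro a <;>
        simp only [himg]
      · exact measurable_set_iff.mp hconfig (g.symm a)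
      · exact measurable_set_iff.mp (hmeas n) (g.symm a)
    have hs : MeasurableSet {q : Set V × Set V | u ∈ q.2} :=
      measurableSet_setOf.mpr ((measurable_set_mem u).comp measurable_snd)
    have hmaps := congrArg (fun μ : Measure (Set V × Set V) =>
      μ {q : Set V × Set V | u ∈ q.2}) (hinv n g)
    rw [Measure.map_apply hmeas2 hs, Measure.map_apply hmeas1 hs] at hmaps
    have e1 : (fun x => (⇑g '' config U p x, ⇑g '' Γ n x)) ⁻¹' {q : Set V × Set V | u ∈ q.2}
        = {x | v ∈ Γ n x} := by
      ext x
      simp only [Set.mem_preimage, Set.mem_setOf_eq, himg]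
      have : g.symm u = v := by rw [← hg, g.symm_apply_apply]
      rw [this]
    have e2 : (fun x => (config U p x, Γ n x)) ⁻¹' {q : Set V × Set V | u ∈ q.2}
        = {x | u ∈ Γ n x} := rfl
    rw [e1, e2] at hmaps
    exact hmaps.symm
  -- the bad events
  set Bad : ℕ → Set Ω := fun r => (fun x => config U p x) ⁻¹' (AA G v r)ᶜ with hBad
  have hBadMeas : ∀ r, MeasurableSet (Bad r) := fun r => hconfig (meas_AA G v r).compl
  have hBadAnti : Antitone Bad := by
    intro r r' hrr' x hx
    exact fun hmem => hx (AA_mono G v hrr' hmem)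
  have hBadNull : P (⋂ r, Bad r) = 0 := by
    have hae : ∀ᵐ x ∂P, ∃ r : ℕ, config U p x ∈ AA G v r :=
      huniq.mono fun x hx => exists_r G hconn hlf v hx
    refine measure_mono_null ?_ (ae_iff.mp hae)
    intro x hx
    simp only [Set.mem_iInter] at hx
    simp only [Set.mem_setOf_eq, not_exists]
    exact fun r hr => hx r hr
  have hBadLim : Tendsto (fun r => P (Bad r)) atTop (nhds 0) := by
    have := tendsto_measure_iInter_atTop (μ := P)
      (fun r => (hBadMeas r).nullMeasurableSet) hBadAnti ⟨0, measure_ne_top P _⟩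
    rwa [hBadNull] at this
  -- the key estimate
  have key : ∀ r n : ℕ, r ≤ n →
      P {x | v ∉ xiSet G (Cinf G (config U p x)) (config U p x) (Γ n x) n} ≤
        P (Bad r) + ((ball_finite G hlf hconn v r).toFinset.card : ENNReal) *
          P {x | v ∈ Γ n x} := by
    intro r n hrn
    set Bf : Finset V := (ball_finite G hlf hconn v r).toFinset with hBf
    have hsub : {x | v ∉ xiSet G (Cinf G (config U p x)) (config U p x) (Γ n x) n} ⊆
        Bad r ∪ ⋃ u ∈ Bf, {x | u ∈ Γ n x} := by
      intro x hx
      by_contra hx'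
      simp only [Set.mem_union, Set.mem_iUnion, not_or, not_exists] at hx'
      obtain ⟨hgood, hball⟩ := hx'
      have hgood' : config U p x ∈ AA G v r := by
        have := hgood
        rw [hBad] at this
        simpa using this
      obtain ⟨⟨u₀, hu₀, hd₀⟩, W, hWr, hWω, hWS, hWreach⟩ := hgood'
      have hWnoΓ : ∀ y ∈ W, y ∉ Γ n x := by
        intro y hyW hyΓ
        have hyBf : y ∈ Bf := (Set.Finite.mem_toFinset _).mpr (hWr y hyW)
        exact hball y hyBf hyΓ
      refine hx ⟨⟨u₀, hu₀, hd₀.trans hrn⟩, ?_, ?_⟩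
      · intro y hy
        have hyW := hWS y hy
        exact ⟨hWω y hyW, hWnoΓ y hyW⟩
      · intro a ha b hb
        refine (hWreach a ha b hb).mono (restrict_le_restrict G ?_)
        intro z hz
        exact ⟨hWω z hz, hWnoΓ z hz⟩
    calc P {x | v ∉ xiSet G (Cinf G (config U p x)) (config U p x) (Γ n x) n}
        ≤ P (Bad r ∪ ⋃ u ∈ Bf, {x | u ∈ Γ n x}) := measure_mono hsub
      _ ≤ P (Bad r) + P (⋃ u ∈ Bf, {x | u ∈ Γ n x}) := measure_union_le _ _
      _ ≤ P (Bad r) + ∑ u ∈ Bf, P {x | u ∈ Γ n x} := by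
          exact add_le_add le_rfl (measure_biUnion_finset_le Bf _)
      _ = P (Bad r) + (Bf.card : ENNReal) * P {x | v ∈ Γ n x} := by
          rw [Finset.sum_congr rfl fun u _ => hGam n u, Finset.sum_const, nsmul_eq_mul]
  -- conclude
  rw [ENNReal.tendsto_atTop_zero]
  intro ε hε
  rw [ENNReal.tendsto_atTop_zero] at hBadLim
  obtain ⟨r, hr⟩ := hBadLim (ε / 2) (ENNReal.half_pos hε.ne')
  set c : ENNReal := ((ball_finite G hlf hconn v r).toFinset.card : ENNReal) with hc
  have hδpos : 0 < ε / 2 / (c + 1) := by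
    refine ENNReal.div_pos (ENNReal.half_pos hε.ne').ne' ?_
    exact ENNReal.add_ne_top.mpr ⟨ENNReal.natCast_ne_top _, ENNReal.one_ne_top⟩
  rw [ENNReal.tendsto_atTop_zero] at hlim
  obtain ⟨N, hN⟩ := hlim (ε / 2 / (c + 1)) hδpos
  refine ⟨max r N, fun n hn => ?_⟩
  have hrn : r ≤ n := le_trans (le_max_left _ _) hn
  calc P {x | v ∉ xiSet G (Cinf G (config U p x)) (config U p x) (Γ n x) n}
      ≤ P (Bad r) + c * P {x | v ∈ Γ n x} := key r n hrn
    _ ≤ ε / 2 + (c + 1) * (ε / 2 / (c + 1)) := by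
        refine add_le_add (hr r le_rfl) ?_
        exact mul_le_mul' (le_add_right le_rfl) (hN n (le_trans (le_max_right _ _) hn))
    _ ≤ ε / 2 + ε / 2 := add_le_add le_rfl ENNReal.mul_div_le
    _ = ε := ENNReal.add_halves ε
end

section
/- Let G be an infinite, locally finite, connected graph, let ω ⊆ V be a configuration with a unique infinite cluster U of the induced subgraph, and let Γ ⊆ V. Define ξ to be the set of vertices w with d_G(w,U) ≤ n such that ⋃_{u ∈ D(w)∪{w}} U(u) is contained in a single connected component of the subgraph induced by ω ∖ Γ, where D(w) is the set of neighbours of w and U(u) is the set of vertices of U at minimal graph distance from u. If the subgraph of G induced by ξ contains an infinite connected component ξ^∞, then ⋃_{v ∈ ξ^∞} U(v) is contained in a single connected component of the subgraph induced by ω ∖ Γ, and this component is infinite; in particular ω ∖ Γ contains an infinite cluster. -/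
open MeasureTheory ProbabilityTheory Filter

open Percolation

section Aux

variable {V : Type*}

private lemma restrict_mem_of_reachable {G : SimpleGraph V} {s : Set V} {a b : V}
    (h : (restrict G s).Reachable a b) (ha : a ∈ s) : b ∈ s := by
  obtain ⟨p⟩ := h
  induction p with
  | nil => exact ha
  | cons h p ih => exact ih h.2.2

private lemma nearSet_nonempty {G : SimpleGraph V} {T : Set V} (hT : T.Nonempty) (u : V) :
    (nearSet G T u).Nonempty := by
  have hne : {m | ∃ y ∈ T, G.dist u y = m}.Nonempty := ⟨_, hT.choose, hT.choose_spec, rfl⟩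
  obtain ⟨y, hy, hyd⟩ := Nat.sInf_mem hne
  refine ⟨y, hy, fun z hz => ?_⟩
  rw [hyd]
  exact Nat.sInf_le ⟨z, hz, rfl⟩

private lemma ball_finite {G : SimpleGraph V} (hlf : G.LocallyFinite) (hconn : G.Connected)
    (n : ℕ) (y : V) : {v | G.dist v y ≤ n}.Finite := by
  induction n with
  | zero =>
    refine (Set.finite_singleton y).subset fun v hv => ?_
    have := (hconn.dist_eq_zero_iff).mp (Nat.le_zero.mp hv)
    simpa using this
  | succ n ih =>
    have : {v | G.dist v y ≤ n + 1} ⊆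
        {v | G.dist v y ≤ n} ∪ ⋃ w ∈ {v | G.dist v y ≤ n}, (G.neighborSet w : Set V) := by
      intro v hv
      obtain ⟨p, hp⟩ := hconn.exists_walk_length_eq_dist v y
      cases p with
      | nil => left; simp [SimpleGraph.dist_self]
      | cons h q =>
        right
        simp only [SimpleGraph.Walk.length_cons] at hp
        have hv' : G.dist v y ≤ n + 1 := hv
        have hq : G.dist _ y ≤ n := le_trans (SimpleGraph.dist_le q) (by omega)
        exact Set.mem_biUnion hq h.symm
    exact (ih.union (ih.biUnion fun w _ => by haveI := hlf w; exact (G.neighborSet w).toFinite)).subset this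

private lemma chain_reach {G : SimpleGraph V} {Uc ω Γ : Set V} {n : ℕ} :
    ∀ {v v' : V}, (restrict G (xiSet G Uc ω Γ n)).Walk v v' → v ∈ xiSet G Uc ω Γ n →
    ∀ a ∈ nearSet G Uc v, ∀ b ∈ nearSet G Uc v', (restrict G (ω \ Γ)).Reachable a b := by
  intro v v' p
  induction p with
  | nil =>
    intro hv a ha b hb
    refine hv.2.2 a ?_ b ?_ <;>
      exact Set.mem_biUnion (Set.mem_insert _ _) (by assumption)
  | @cons v x v' h q ih =>
    intro hv a ha b hb
    have hx : x ∈ xiSet G Uc ω Γ n := h.2.2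
    have hUcne : Uc.Nonempty := ⟨hx.1.choose, hx.1.choose_spec.1⟩
    obtain ⟨c, hc⟩ := nearSet_nonempty (G := G) hUcne x
    have h1 : (restrict G (ω \ Γ)).Reachable a c := by
      refine hv.2.2 a (Set.mem_biUnion (Set.mem_insert _ _) ha) c
        (Set.mem_biUnion (Set.mem_insert_of_mem _ h.1) hc)
    exact h1.trans (ih hx c hc b hb)

end Aux

/-- Deterministic lemma: if the subgraph induced by `ξ` has an infinite component
`ξ^∞`, then `⋃_{v ∈ ξ^∞} U(v)` lies in a single connected component of `ω ∖ Γ`,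
this component is infinite, and in particular `ω ∖ Γ` has an infinite cluster. -/
theorem stmt12 {V : Type*} (G : SimpleGraph V) [Infinite V]
    (hlf : G.LocallyFinite) (hconn : G.Connected)
    (ω Γ Uc : Set V) (n : ℕ)
    (hU : Uc ∈ infClusters G ω) (huniq : ∀ C ∈ infClusters G ω, C = Uc)
    (w0 : V) (hw0 : w0 ∈ xiSet G Uc ω Γ n)
    (hinf : (cluster G (xiSet G Uc ω Γ n) w0).Infinite) :
    InOneComponent G (ω \ Γ)
        (⋃ u ∈ cluster G (xiSet G Uc ω Γ n) w0, nearSet G Uc u) ∧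
      (∀ a ∈ ⋃ u ∈ cluster G (xiSet G Uc ω Γ n) w0, nearSet G Uc u,
        (cluster G (ω \ Γ) a).Infinite) ∧
      HasInfCluster G (ω \ Γ) := by
  classical
  set ξ := xiSet G Uc ω Γ n with hξ
  set K := cluster G ξ w0 with hK
  have hKξ : ∀ v ∈ K, v ∈ ξ := fun v hv => restrict_mem_of_reachable hv hw0
  have hUcne : Uc.Nonempty := ⟨hw0.1.choose, hw0.1.choose_spec.1⟩
  set S := ⋃ v ∈ K, nearSet G Uc v with hS
  have hw0K : w0 ∈ K := SimpleGraph.Reachable.refl _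
  -- S lies in ω \ Γ
  have hSsub : S ⊆ ω \ Γ := by
    intro a ha
    obtain ⟨v, hv, hav⟩ := Set.mem_iUnion₂.mp ha
    exact (hKξ v hv).2.1 (Set.mem_biUnion (Set.mem_insert _ _) hav)
  -- any two points of S are connected in ω \ Γ
  have hSreach : ∀ a ∈ S, ∀ b ∈ S, (restrict G (ω \ Γ)).Reachable a b := by
    intro a ha b hb
    obtain ⟨v, hv, hav⟩ := Set.mem_iUnion₂.mp ha
    obtain ⟨v', hv', hbv⟩ := Set.mem_iUnion₂.mp hb
    obtain ⟨p⟩ := ((hv : (restrict G ξ).Reachable w0 v).symm.trans hv')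
    exact chain_reach p (hKξ v hv) a hav b hbv
  -- S is infinite
  have hSinf : S.Infinite := by
    intro hfin
    have hcover : K ⊆ ⋃ y ∈ S, {v | G.dist v y ≤ n} := by
      intro v hv
      obtain ⟨a, ha⟩ := nearSet_nonempty (G := G) hUcne v
      obtain ⟨u, hu, hun⟩ := (hKξ v hv).1
      have : G.dist v a ≤ n := le_trans (ha.2 u hu) hun
      exact Set.mem_biUnion (Set.mem_biUnion hv ha) this
    exact hinf ((hfin.biUnion fun y _ => ball_finite hlf hconn n y).subset hcover)
  have hcl : ∀ a ∈ S, (cluster G (ω \ Γ) a).Infinite := by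
    intro a ha
    exact hSinf.mono fun b hb => hSreach a ha b hb
  refine ⟨⟨hSsub, hSreach⟩, hcl, ?_⟩
  obtain ⟨a, ha⟩ := nearSet_nonempty (G := G) hUcne w0
  have haS : a ∈ S := Set.mem_biUnion hw0K ha
  exact ⟨a, hSsub haS, hcl a haS⟩
end
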